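/- For the path P_n on n ≥ 2 vertices, γ_pr(P_n) = 2⌈n/4⌉. -/

import Mathlib

open SimpleGraph

/-- A set `S` is a paired-dominating set of `G`: every vertex outside `S` has a
neighbor in `S`, and the induced subgraph `G[S]` has a perfect matching
(a matching subgraph of `G` whose vertex set is exactly `S`). -/
def IsPDS {V : Type*} (G : SimpleGraph V) (S : Set V) : Prop :=
  (∀ v ∉ S, ∃ u ∈ S, G.Adj u v) ∧
    ∃ M : G.Subgraph, M.verts = S ∧ M.IsMatching

/-- The paired-domination number of `G`. -/
noncomputable def gammaPr {V : Type*} (G : SimpleGraph V) : ℕ :=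
  sInf {n | ∃ S : Set V, IsPDS G S ∧ S.ncard = n}

/-- `v` is a cut-vertex of `G`: deleting `v` disconnects two vertices that
were reachable from each other in `G`. -/
def IsCutVertex {V : Type*} (G : SimpleGraph V) (v : V) : Prop :=
  ∃ (a b : V) (ha : a ∈ ({v}ᶜ : Set V)) (hb : b ∈ ({v}ᶜ : Set V)),
    G.Reachable a b ∧
      ¬ (G.induce ({v}ᶜ : Set V)).Reachable ⟨a, ha⟩ ⟨b, hb⟩

/-- `B` is a block of `G`: a maximal set of vertices inducing a connected
subgraph without a cut-vertex. -/
def IsBlock {V : Type*} (G : SimpleGraph V) (B : Set V) : Prop :=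
  (G.induce B).Connected ∧ (∀ v : B, ¬ IsCutVertex (G.induce B) v) ∧
    ∀ C : Set V, B ⊆ C → (G.induce C).Connected →
      (∀ v : C, ¬ IsCutVertex (G.induce C) v) → C = B

/-- `G` is a block graph: connected, and every block is complete. -/
def IsBlockGraph {V : Type*} (G : SimpleGraph V) : Prop :=
  G.Connected ∧ ∀ B : Set V, IsBlock G B →
    ∀ a ∈ B, ∀ b ∈ B, a ≠ b → G.Adj a b

/-- An end block: a block containing exactly one cut-vertex of `G`. -/
def IsEndBlock {V : Type*} (G : SimpleGraph V) (B : Set V) : Prop :=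
  IsBlock G B ∧ ∃! v : V, v ∈ B ∧ IsCutVertex G v


namespace Stmt13Aux

/-- number of pairs -/
def K (n : ℕ) : ℕ := (n+3)/4
/-- left endpoint of pair k -/
def q (n k : ℕ) : ℕ := min (4*k+1) (n-2)

lemma q_cases (n k : ℕ) : q n k = 4*k+1 ∧ 4*k+1 ≤ n-2 ∨ q n k = n-2 ∧ n-2 ≤ 4*k+1 := by
  unfold q; rcases le_total (4*k+1) (n-2) with h|h
  · exact Or.inl ⟨min_eq_left h, h⟩
  · exact Or.inr ⟨min_eq_right h, h⟩

lemma q_lt {n : ℕ} (hn : 2 ≤ n) (k : ℕ) : q n k + 1 < n := by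
  rcases q_cases n k with ⟨h1,h2⟩|⟨h1,h2⟩ <;> omega

lemma q_ge {n k : ℕ} (hk : k < K n) : 4*k ≤ q n k + 1 := by
  have h4 : (n+3)/4 * 4 ≤ n + 3 := Nat.div_mul_le_self _ _
  have : k + 1 ≤ (n+3)/4 := hk
  rcases q_cases n k with ⟨h1,h2⟩|⟨h1,h2⟩ <;> omega

lemma q_gap {n k k' : ℕ} (h : k < k') (hk' : k' < K n) : q n k + 1 < q n k' := by
  have h1 := q_ge hk'
  rcases q_cases n k with ⟨ha,hb⟩|⟨ha,hb⟩ <;> omega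

lemma q_disj {n k k' : ℕ} (hk : k < K n) (hk' : k' < K n) (hne : k ≠ k') :
    q n k + 1 < q n k' ∨ q n k' + 1 < q n k := by
  rcases lt_or_gt_of_ne hne with h|h
  · exact Or.inl (q_gap h hk')
  · exact Or.inr (q_gap h hk)

/-- the paired dominating set -/
def Sset (n : ℕ) : Set (Fin n) :=
  {v | ∃ k, k < K n ∧ (v.val = q n k ∨ v.val = q n k + 1)}

/-- the matching subgraph -/
def Msub (n : ℕ) (hn : 2 ≤ n) : (pathGraph n).Subgraph where
  verts := Sset n
  Adj x y := ∃ k, k < K n ∧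
    ((x.val = q n k ∧ y.val = q n k + 1) ∨ (y.val = q n k ∧ x.val = q n k + 1))
  adj_sub := by
    rintro x y ⟨k, hk, h|h⟩ <;> rw [pathGraph_adj] <;> omega
  edge_vert := by
    rintro x y ⟨k, hk, h|h⟩
    · exact ⟨k, hk, Or.inl h.1⟩
    · exact ⟨k, hk, Or.inr h.2⟩
  symm := by
    constructor
    rintro x y ⟨k, hk, h|h⟩
    · exact ⟨k, hk, Or.inr h⟩
    · exact ⟨k, hk, Or.inl h⟩

lemma Msub_matching (n : ℕ) (hn : 2 ≤ n) : (Msub n hn).IsMatching := by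
  rintro v ⟨k, hk, hv⟩
  rcases hv with hv | hv
  · refine ⟨⟨q n k + 1, q_lt hn k⟩, ⟨k, hk, Or.inl ⟨hv, rfl⟩⟩, ?_⟩
    rintro y ⟨k', hk', h⟩
    by_cases hkk : k = k'
    · subst hkk
      rcases h with ⟨h1, h2⟩ | ⟨h1, h2⟩
      · exact Fin.ext h2
      · omega
    · exfalso; rcases q_disj hk hk' hkk with hd|hd <;> rcases h with ⟨h1,h2⟩|⟨h1,h2⟩ <;> omega
  · have hlt : q n k < n := by have := q_lt hn k; omega
    refine ⟨⟨q n k, hlt⟩, ⟨k, hk, Or.inr ⟨rfl, hv⟩⟩, ?_⟩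
    rintro y ⟨k', hk', h⟩
    by_cases hkk : k = k'
    · subst hkk
      rcases h with ⟨h1, h2⟩ | ⟨h1, h2⟩
      · omega
      · exact Fin.ext h1
    · exfalso; rcases q_disj hk hk' hkk with hd|hd <;> rcases h with ⟨h1,h2⟩|⟨h1,h2⟩ <;> omega

lemma Sset_dom (n : ℕ) (hn : 2 ≤ n) :
    ∀ v ∉ Sset n, ∃ u ∈ Sset n, (pathGraph n).Adj u v := by
  intro v hv
  set k := v.val / 4 with hkdef
  have hvlt := v.isLt
  have hk : k < K n := by unfold K; omega
  have hq := q_lt hn k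
  have hrange : q n k ≤ v.val + 1 ∧ v.val ≤ q n k + 2 := by
    rcases q_cases n k with ⟨h1,h2⟩|⟨h1,h2⟩ <;> omega
  have hne1 : v.val ≠ q n k := fun h => hv ⟨k, hk, Or.inl h⟩
  have hne2 : v.val ≠ q n k + 1 := fun h => hv ⟨k, hk, Or.inr h⟩
  have hcase : v.val + 1 = q n k ∨ v.val = q n k + 2 := by omega
  rcases hcase with h | h
  · refine ⟨⟨q n k, by omega⟩, ⟨k, hk, Or.inl rfl⟩, ?_⟩
    rw [pathGraph_adj]; right; simp only [Fin.val_mk]; omega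
  · refine ⟨⟨q n k + 1, hq⟩, ⟨k, hk, Or.inr rfl⟩, ?_⟩
    rw [pathGraph_adj]; left; simp only [Fin.val_mk]; omega

/-- enumeration of Sset -/
def F (n : ℕ) (hn : 2 ≤ n) : Fin (2 * K n) → Fin n :=
  fun j => ⟨q n (j.val / 2) + j.val % 2, by have := q_lt hn (j.val / 2); omega⟩

lemma F_inj (n : ℕ) (hn : 2 ≤ n) : Function.Injective (F n hn) := by
  intro j j' h
  have hval : q n (j.val / 2) + j.val % 2 = q n (j'.val / 2) + j'.val % 2 := by
    have := congrArg Fin.val h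
    simpa only [F] using this
  have hj := j.isLt; have hj' := j'.isLt
  have hjk : j.val / 2 < K n := by omega
  have hjk' : j'.val / 2 < K n := by omega
  by_cases hd : j.val / 2 = j'.val / 2
  · rw [hd] at hval
    apply Fin.ext; show j.val = j'.val; omega
  · exfalso; rcases q_disj hjk hjk' hd with hg|hg <;> omega

lemma Sset_eq (n : ℕ) (hn : 2 ≤ n) :
    Sset n = ↑(Finset.image (F n hn) Finset.univ) := by
  ext v
  simp only [Finset.coe_image, Finset.coe_univ, Set.image_univ, Set.mem_range, Sset,
    Set.mem_setOf_eq]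
  constructor
  · rintro ⟨k, hk, h|h⟩
    · refine ⟨⟨2*k, by omega⟩, Fin.ext ?_⟩
      show q n (2*k/2) + 2*k%2 = v.val
      have h2 : 2*k/2 = k := by omega
      have h3 : 2*k%2 = 0 := by omega
      rw [h2, h3]; omega
    · refine ⟨⟨2*k+1, by omega⟩, Fin.ext ?_⟩
      show q n ((2*k+1)/2) + (2*k+1)%2 = v.val
      have h2 : (2*k+1)/2 = k := by omega
      have h3 : (2*k+1)%2 = 1 := by omega
      rw [h2, h3]; omega
  · rintro ⟨j, rfl⟩
    have hj := j.isLt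
    refine ⟨j.val / 2, by omega, ?_⟩
    have : j.val % 2 = 0 ∨ j.val % 2 = 1 := by omega
    rcases this with h|h
    · left; simp [F, h]
    · right; simp [F, h]

lemma Sset_ncard (n : ℕ) (hn : 2 ≤ n) : (Sset n).ncard = 2 * K n := by
  rw [Sset_eq n hn, Set.ncard_coe_finset,
    Finset.card_image_of_injective _ (F_inj n hn), Finset.card_univ, Fintype.card_fin]



lemma lower (n : ℕ) (hn : 2 ≤ n) (S : Set (Fin n))
    (hdom : ∀ v ∉ S, ∃ u ∈ S, (pathGraph n).Adj u v)
    (M : (pathGraph n).Subgraph) (hMv : M.verts = S) (hM : M.IsMatching) :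
    2 * ((n + 3) / 4) ≤ S.ncard := by
  classical
  set L : Set (Fin n) := {v | ∃ w, M.Adj v w ∧ v.val + 1 = w.val} with hLdef
  set U : Set (Fin n) := {v | ∃ w, M.Adj v w ∧ w.val + 1 = v.val} with hUdef
  have hadj : ∀ {x y : Fin n}, M.Adj x y → (x.val + 1 = y.val ∨ y.val + 1 = x.val) :=
    fun h => (pathGraph_adj).1 (M.adj_sub h)
  have hSLU : S = L ∪ U := by
    ext v; constructor
    · intro hv
      have hv' : v ∈ M.verts := by rw [hMv]; exact hv
      obtain ⟨w, hw, -⟩ := hM hv'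
      rcases hadj hw with h | h
      · exact Or.inl ⟨w, hw, h⟩
      · exact Or.inr ⟨w, hw, h⟩
    · rintro (⟨w, hw, -⟩ | ⟨w, hw, -⟩) <;> exact hMv ▸ M.edge_vert hw
  have hdisj : Disjoint L U := by
    rw [Set.disjoint_left]
    rintro v ⟨w1, hw1, h1⟩ ⟨w2, hw2, h2⟩
    obtain ⟨w, -, huniq⟩ := hM (M.edge_vert hw1)
    have e : w1 = w2 := (huniq w1 hw1).trans (huniq w2 hw2).symm
    have := congrArg Fin.val e
    omega
  -- down-partner function on U
  have hU' : ∀ v : Fin n, ∃ w : Fin n, v ∈ U → M.Adj v w ∧ w.val + 1 = v.val := by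
    intro v
    by_cases hv : v ∈ U
    · obtain ⟨w, hw⟩ := hv; exact ⟨w, fun _ => hw⟩
    · exact ⟨v, fun h => absurd h hv⟩
  choose pd hpd using hU'
  -- dominator function
  have hd' : ∀ v : Fin n, ∃ u : Fin n,
      (v ∈ S → u = v) ∧ (v ∉ S → u ∈ S ∧ (pathGraph n).Adj u v) := by
    intro v
    by_cases hv : v ∈ S
    · exact ⟨v, fun _ => rfl, fun h => absurd hv h⟩
    · obtain ⟨u, hu1, hu2⟩ := hdom v hv
      exact ⟨u, fun h => absurd h hv, fun _ => ⟨hu1, hu2⟩⟩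
  choose d hd1 hd2 using hd'
  set lep : Fin n → Fin n := fun u => if u ∈ U then pd u else u with hlepdef
  have hlepL : ∀ u ∈ S, lep u ∈ L ∧ ((lep u).val = u.val ∨ (lep u).val + 1 = u.val) := by
    intro u hu
    by_cases hUu : u ∈ U
    · obtain ⟨ha, hv⟩ := hpd u hUu
      have hlu : lep u = pd u := by simp [hlepdef, hUu]
      rw [hlu]
      exact ⟨⟨u, ha.symm, hv⟩, Or.inr hv⟩
    · have hlu : lep u = u := by simp [hlepdef, hUu]
      rw [hlu]
      have : u ∈ L := by
        rw [hSLU] at hu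
        rcases hu with h | h
        · exact h
        · exact absurd h hUu
      exact ⟨this, Or.inl rfl⟩
  set Λ : Fin n → Fin n := fun v => lep (d v) with hΛdef
  have hΛ : ∀ v : Fin n, Λ v ∈ L ∧ (Λ v).val ≤ v.val + 1 ∧ v.val ≤ (Λ v).val + 2 := by
    intro v
    have hdS : d v ∈ S ∧
        ((d v).val = v.val ∨ (d v).val + 1 = v.val ∨ v.val + 1 = (d v).val) := by
      by_cases hv : v ∈ S
      · rw [hd1 v hv]; exact ⟨hv, Or.inl rfl⟩
      · obtain ⟨h1, h2⟩ := hd2 v hv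
        rcases (pathGraph_adj).1 h2 with h | h
        · exact ⟨h1, Or.inr (Or.inl h)⟩
        · exact ⟨h1, Or.inr (Or.inr h)⟩
    obtain ⟨h1, h2⟩ := hlepL (d v) hdS.1
    have h3 := hdS.2
    refine ⟨h1, ?_, ?_⟩ <;> simp only [hΛdef] <;> omega
  -- counting
  have hfiber : ∀ b ∈ Finset.univ.image Λ,
      (Finset.univ.filter (fun a => Λ a = b)).card ≤ 4 := by
    intro b _
    have hsub : ((Finset.univ.filter (fun a => Λ a = b)).card ≤
        (Finset.Icc (b.val - 1) (b.val + 2)).card) := by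
      apply Finset.card_le_card_of_injOn Fin.val
      · intro v hv
        simp only [Finset.mem_coe, Finset.mem_filter, Finset.mem_univ, true_and] at hv
        have := hΛ v
        rw [hv] at this
        simp only [Finset.mem_coe, Finset.mem_Icc]
        omega
      · intro x _ y _ hxy
        exact Fin.ext hxy
    have : (Finset.Icc (b.val - 1) (b.val + 2)).card ≤ 4 := by
      rw [Nat.card_Icc]; omega
    omega
  have hcount : n ≤ 4 * (Finset.univ.image Λ).card := by
    have := Finset.card_le_mul_card_image (f := Λ) Finset.univ 4 hfiber
    simpa using this
  have himL : Finset.univ.image Λ ⊆ L.toFinset := by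
    intro b hb
    simp only [Finset.mem_image, Finset.mem_univ, true_and] at hb
    obtain ⟨v, rfl⟩ := hb
    rw [Set.mem_toFinset]
    exact (hΛ v).1
  have hnL : n ≤ 4 * L.ncard := by
    have h1 : (Finset.univ.image Λ).card ≤ L.toFinset.card := Finset.card_le_card himL
    rw [Set.ncard_eq_toFinset_card']
    omega
  -- L and U have equal cardinality
  have hLU_eq : L = pd '' U := by
    ext l; constructor
    · rintro ⟨w, hw, hval⟩
      have hwU : w ∈ U := ⟨l, hw.symm, hval⟩
      refine ⟨w, hwU, ?_⟩
      obtain ⟨hadj', -⟩ := hpd w hwU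
      obtain ⟨z, -, huniq⟩ := hM (M.edge_vert hw.symm)
      exact (huniq (pd w) hadj').trans (huniq l hw.symm).symm
    · rintro ⟨u, hu, rfl⟩
      obtain ⟨ha, hv⟩ := hpd u hu
      exact ⟨u, ha.symm, hv⟩
  have hinj : Set.InjOn pd U := by
    intro u hu u' hu' h
    obtain ⟨ha, -⟩ := hpd u hu
    obtain ⟨ha', -⟩ := hpd u' hu'
    rw [h] at ha
    obtain ⟨z, -, huniq⟩ := hM (M.edge_vert ha.symm)
    exact (huniq u ha.symm).trans (huniq u' ha'.symm).symm
  have hcardeq : L.ncard = U.ncard := by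
    rw [hLU_eq]; exact Set.ncard_image_of_injOn hinj
  have hScard : S.ncard = L.ncard + U.ncard := by
    rw [hSLU]
    exact Set.ncard_union_eq hdisj (Set.toFinite _) (Set.toFinite _)
  omega

end Stmt13Aux

/-- For the path `P_n` on `n ≥ 2` vertices, `γ_pr(P_n) = 2⌈n/4⌉`. -/
theorem stmt13 (n : ℕ) (hn : 2 ≤ n) :
    gammaPr (SimpleGraph.pathGraph n) = 2 * ((n + 3) / 4) := by
  apply le_antisymm
  · apply Nat.sInf_le
    exact ⟨Stmt13Aux.Sset n,
      ⟨Stmt13Aux.Sset_dom n hn, Stmt13Aux.Msub n hn, rfl, Stmt13Aux.Msub_matching n hn⟩,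
      Stmt13Aux.Sset_ncard n hn⟩
  · refine le_csInf ⟨2 * ((n + 3) / 4), Stmt13Aux.Sset n,
      ⟨Stmt13Aux.Sset_dom n hn, Stmt13Aux.Msub n hn, rfl, Stmt13Aux.Msub_matching n hn⟩,
      Stmt13Aux.Sset_ncard n hn⟩ ?_
    rintro m ⟨S, ⟨hdom, M, hMv, hM⟩, rfl⟩
    exact Stmt13Aux.lower n hn S hdom M hMv hM
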